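/- For a finite-horizon MDP with horizon H, any policy π, and reward function r bounded by B ≥ 0 (i.e., 0 ≤ r_h(s,a) ≤ B for all s,a,h), the expected sum over steps h of the one-step conditional variances of the value function satisfies: E_π[ sum_{h=1}^H Var_{P_h(·|s_h,a_h)}(V^π_{h+1}) ] ≤ B H V^π_1(s_1), where the MDP starts from fixed state s_1. -/

import Mathlib

open Finset

noncomputable def Wrec {S A : Type*} [Fintype S] [Fintype A]
    (H : ℕ) (P : ℕ → S → A → S → ℝ) (pol : ℕ → S → A → ℝ)
    (r : ℕ → S → A → ℝ) (V : ℕ → S → ℝ) : ℕ → S → ℝ :=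
  fun h =>
    if hle : H + 1 ≤ h then fun _ => 0
    else fun s => ∑ a : A, pol h s a *
      ((r h s a)^2 + 2 * r h s a * (∑ s' : S, P h s a s' * V (h+1) s')
        + ∑ s' : S, P h s a s' * Wrec H P pol r V (h+1) s')
  termination_by h => H + 1 - h
  decreasing_by simp_wf; omega

lemma jensen_sq {A : Type*} [Fintype A] (w q : A → ℝ)
    (hw : ∀ a, 0 ≤ w a) (hsum : ∑ a, w a = 1) :
    (∑ a, w a * q a)^2 ≤ ∑ a, w a * (q a)^2 := by
  have h := Finset.sum_mul_sq_le_sq_mul_sq Finset.univ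
    (fun a => Real.sqrt (w a)) (fun a => Real.sqrt (w a) * q a)
  simp only [mul_pow, Real.sq_sqrt (hw _)] at h
  calc (∑ a, w a * q a)^2 = (∑ a, Real.sqrt (w a) * (Real.sqrt (w a) * q a))^2 := by
        congr 1; exact Finset.sum_congr rfl fun a _ => by
          rw [← mul_assoc, Real.mul_self_sqrt (hw a)]
    _ ≤ (∑ a, w a) * ∑ a, w a * q a ^ 2 := h
    _ = ∑ a, w a * (q a)^2 := by rw [hsum, one_mul]

theorem stmt_4 {S A : Type*} [Fintype S] [DecidableEq S] [Fintype A]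
    (H : ℕ) (hH : 1 ≤ H)
    (P : ℕ → S → A → S → ℝ)
    (hPnonneg : ∀ h s a s', 0 ≤ P h s a s')
    (hPsum : ∀ h s a, ∑ s' : S, P h s a s' = 1)
    (π : ℕ → S → A → ℝ)
    (hπnonneg : ∀ h s a, 0 ≤ π h s a)
    (hπsum : ∀ h s, ∑ a : A, π h s a = 1)
    (B : ℝ) (hB : 0 ≤ B)
    (r : ℕ → S → A → ℝ)
    (hr : ∀ h s a, 0 ≤ r h s a ∧ r h s a ≤ B)
    (s₁ : S)
    (V : ℕ → S → ℝ)
    (hVend : ∀ s, V (H + 1) s = 0)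
    (hV : ∀ h ∈ Finset.Icc 1 H, ∀ s,
      V h s = ∑ a : A, π h s a * (r h s a + ∑ s' : S, P h s a s' * V (h + 1) s'))
    (μ : ℕ → S → A → ℝ)
    (hμ1 : ∀ s a, μ 1 s a = (if s = s₁ then (1 : ℝ) else 0) * π 1 s a)
    (hμ : ∀ h ∈ Finset.Icc 1 (H - 1), ∀ s' a',
      μ (h + 1) s' a' = (∑ s : S, ∑ a : A, μ h s a * P h s a s') * π (h + 1) s' a') :
    ∑ h ∈ Finset.Icc 1 H, ∑ s : S, ∑ a : A,
        μ h s a *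
          ((∑ s' : S, P h s a s' * (V (h + 1) s') ^ 2) -
            (∑ s' : S, P h s a s' * V (h + 1) s') ^ 2)
      ≤ B * H * V 1 s₁ := by
  set W : ℕ → S → ℝ := Wrec H P π r V with hWdef
  -- unfolding equation for W
  have hW_eq : ∀ h, h ≤ H → ∀ s, W h s = ∑ a : A, π h s a *
      ((r h s a)^2 + 2 * r h s a * (∑ s' : S, P h s a s' * V (h+1) s')
        + ∑ s' : S, P h s a s' * W (h+1) s') := by
    intro h hh s
    rw [hWdef, Wrec, dif_neg (by omega : ¬ H + 1 ≤ h)]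
  have hWH1 : ∀ s, W (H + 1) s = 0 := by
    intro s; rw [hWdef, Wrec, dif_pos (le_refl _)]
  -- bounds on V
  have hVb : ∀ k, k ≤ H → ∀ s, 0 ≤ V (H + 1 - k) s ∧ V (H + 1 - k) s ≤ B * k := by
    intro k
    induction k with
    | zero => intro _ s; simp [hVend s]
    | succ k ih =>
      intro hk s
      have hk' : k ≤ H := by omega
      have hidx : H + 1 - (k + 1) + 1 = H + 1 - k := by omega
      have hmem : H + 1 - (k + 1) ∈ Finset.Icc 1 H := by
        simp only [Finset.mem_Icc]; omega
      rw [hV _ hmem s]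
      have hQb : ∀ a, 0 ≤ (∑ s' : S, P (H+1-(k+1)) s a s' * V (H+1-(k+1)+1) s')
          ∧ (∑ s' : S, P (H+1-(k+1)) s a s' * V (H+1-(k+1)+1) s') ≤ B * k := by
        intro a
        constructor
        · exact Finset.sum_nonneg fun s' _ => mul_nonneg (hPnonneg _ _ _ _)
            (by rw [hidx]; exact (ih hk' s').1)
        · calc (∑ s' : S, P (H+1-(k+1)) s a s' * V (H+1-(k+1)+1) s')
              ≤ ∑ s' : S, P (H+1-(k+1)) s a s' * (B * k) := by
                refine Finset.sum_le_sum fun s' _ => ?_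
                exact mul_le_mul_of_nonneg_left (by rw [hidx]; exact (ih hk' s').2)
                  (hPnonneg _ _ _ _)
            _ = B * k := by rw [← Finset.sum_mul, hPsum, one_mul]
      constructor
      · exact Finset.sum_nonneg fun a _ => mul_nonneg (hπnonneg _ _ _)
          (add_nonneg (hr _ _ _).1 (hQb a).1)
      · calc (∑ a : A, π (H+1-(k+1)) s a * (r (H+1-(k+1)) s a +
              ∑ s' : S, P (H+1-(k+1)) s a s' * V (H+1-(k+1)+1) s'))
            ≤ ∑ a : A, π (H+1-(k+1)) s a * (B + B * k) := by
              refine Finset.sum_le_sum fun a _ => ?_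
              exact mul_le_mul_of_nonneg_left (add_le_add (hr _ _ _).2 (hQb a).2)
                (hπnonneg _ _ _)
          _ = B + B * k := by rw [← Finset.sum_mul, hπsum, one_mul]
          _ = B * (k + 1 : ℕ) := by push_cast; ring
  -- bound W ≤ B k V
  have hWb : ∀ k, k ≤ H → ∀ s, W (H + 1 - k) s ≤ B * k * V (H + 1 - k) s := by
    intro k
    induction k with
    | zero => intro _ s; simp [hWH1 s]
    | succ k ih =>
      intro hk s
      have hk' : k ≤ H := by omega
      have hidx : H + 1 - (k + 1) + 1 = H + 1 - k := by omega
      set h := H + 1 - (k + 1) with hh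
      have hhH : h ≤ H := by omega
      have hmem : h ∈ Finset.Icc 1 H := by simp only [Finset.mem_Icc]; omega
      rw [hW_eq h hhH s, hV _ hmem s, Finset.mul_sum]
      refine Finset.sum_le_sum fun a _ => ?_
      set Q : ℝ := ∑ s' : S, P h s a s' * V (h+1) s' with hQdef
      have hQ0 : 0 ≤ Q := Finset.sum_nonneg fun s' _ => mul_nonneg (hPnonneg _ _ _ _)
          (by rw [hidx]; exact (hVb k hk' s').1)
      have hQub : Q ≤ B * k := by
        calc Q ≤ ∑ s' : S, P h s a s' * (B * k) := by
              refine Finset.sum_le_sum fun s' _ => ?_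
              exact mul_le_mul_of_nonneg_left (by rw [hidx]; exact (hVb k hk' s').2)
                (hPnonneg _ _ _ _)
          _ = B * k := by rw [← Finset.sum_mul, hPsum, one_mul]
      have hPW : (∑ s' : S, P h s a s' * W (h+1) s') ≤ B * k * Q := by
        calc (∑ s' : S, P h s a s' * W (h+1) s')
            ≤ ∑ s' : S, P h s a s' * (B * k * V (h+1) s') := by
              refine Finset.sum_le_sum fun s' _ => ?_
              exact mul_le_mul_of_nonneg_left (by rw [hidx]; exact ih hk' s')
                (hPnonneg _ _ _ _)
          _ = B * k * Q := by
              rw [hQdef, Finset.mul_sum]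
              exact Finset.sum_congr rfl fun s' _ => by ring
      have hrb := hr h s a
      have hinner : (r h s a)^2 + 2 * r h s a * Q + (∑ s' : S, P h s a s' * W (h+1) s')
          ≤ B * (k+1 : ℕ) * (r h s a + Q) := by
        push_cast
        rcases le_total (2 * r h s a) B with hc | hc
        · nlinarith [hrb.1, hrb.2, hQ0, hQub, hPW]
        · nlinarith [hrb.1, hrb.2, hQ0, hQub, hPW]
      calc π h s a * ((r h s a)^2 + 2 * r h s a * Q + ∑ s' : S, P h s a s' * W (h+1) s')
          ≤ π h s a * (B * (k+1 : ℕ) * (r h s a + Q)) :=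
            mul_le_mul_of_nonneg_left hinner (hπnonneg _ _ _)
        _ = B * (k+1 : ℕ) * (π h s a * (r h s a + Q)) := by ring
  -- μ nonneg
  have hμnn : ∀ h, 1 ≤ h → h ≤ H → ∀ s a, 0 ≤ μ h s a := by
    intro h h1
    induction h, h1 using Nat.le_induction with
    | base =>
      intro _ s a; rw [hμ1]
      exact mul_nonneg (by split <;> norm_num) (hπnonneg _ _ _)
    | succ h h1 ih =>
      intro hh s a
      rw [hμ h (by simp only [Finset.mem_Icc]; omega) s a]
      refine mul_nonneg (Finset.sum_nonneg fun s _ => Finset.sum_nonneg fun b _ =>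
        mul_nonneg (ih (by omega) s b) (hPnonneg _ _ _ _)) (hπnonneg _ _ _)
  -- factorization μ h s a = ρ(s) * π h s a
  have hfact : ∀ h, 1 ≤ h → h ≤ H → ∀ s a,
      μ h s a = (∑ b : A, μ h s b) * π h s a := by
    intro h h1 h2 s a
    rcases eq_or_lt_of_le h1 with h1' | h1'
    · rw [← h1']
      have hb : (∑ b : A, μ 1 s b) = (if s = s₁ then (1:ℝ) else 0) := by
        simp only [hμ1]; rw [← Finset.mul_sum, hπsum, mul_one]
      rw [hb, hμ1]
    · obtain ⟨m, rfl⟩ : ∃ m, h = m + 1 := ⟨h - 1, by omega⟩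
      have hmem : m ∈ Finset.Icc 1 (H - 1) := by simp only [Finset.mem_Icc]; omega
      have hb : (∑ b : A, μ (m+1) s b) = ∑ s0 : S, ∑ a0 : A, μ m s0 a0 * P m s0 a0 s := by
        simp only [hμ m hmem]; rw [← Finset.mul_sum, hπsum, mul_one]
      rw [hb, hμ m hmem]
  -- the potential function
  set Ghat : ℕ → ℝ := fun h => if h ≤ H then
      ∑ s : S, ∑ a : A, μ h s a * (W h s - (V h s)^2) else 0 with hGdef
  -- key: Ghat (h+1) in terms of μ h
  have hGkey : ∀ h, 1 ≤ h → h ≤ H → Ghat (h+1) =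
      ∑ s : S, ∑ a : A, μ h s a *
        (∑ s' : S, P h s a s' * (W (h+1) s' - (V (h+1) s')^2)) := by
    intro h h1 h2
    rcases eq_or_lt_of_le h2 with hHeq | hlt
    · simp only [hGdef, if_neg (show ¬ h + 1 ≤ H by omega)]
      symm
      refine Finset.sum_eq_zero fun s _ => Finset.sum_eq_zero fun a _ => ?_
      have hz : (∑ s' : S, P h s a s' * (W (h+1) s' - (V (h+1) s')^2)) = 0 := by
        refine Finset.sum_eq_zero fun s' _ => ?_
        rw [hHeq, hWH1 s', hVend s']; ring
      rw [hz, mul_zero]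
    · have hmem : h ∈ Finset.Icc 1 (H - 1) := by simp only [Finset.mem_Icc]; omega
      simp only [hGdef]
      simp only [if_pos (by omega : h + 1 ≤ H)]
      calc (∑ s' : S, ∑ a' : A, μ (h+1) s' a' * (W (h+1) s' - (V (h+1) s')^2))
          = ∑ s' : S, (∑ s : S, ∑ a : A, μ h s a * P h s a s') *
              (W (h+1) s' - (V (h+1) s')^2) := by
            refine Finset.sum_congr rfl fun s' _ => ?_
            simp only [hμ h hmem s']
            rw [show (∑ a' : A, (∑ s : S, ∑ a : A, μ h s a * P h s a s') * π (h+1) s' a' *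
                (W (h+1) s' - (V (h+1) s')^2)) =
                (∑ s : S, ∑ a : A, μ h s a * P h s a s') *
                  (W (h+1) s' - (V (h+1) s')^2) * (∑ a' : A, π (h+1) s' a') from by
              rw [Finset.mul_sum]; exact Finset.sum_congr rfl fun a' _ => by ring]
            rw [hπsum, mul_one]
        _ = ∑ s : S, ∑ a : A, μ h s a *
              (∑ s' : S, P h s a s' * (W (h+1) s' - (V (h+1) s')^2)) := by
            simp only [Finset.sum_mul]
            rw [Finset.sum_comm]
            refine Finset.sum_congr rfl fun s _ => ?_
            rw [Finset.sum_comm]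
            refine Finset.sum_congr rfl fun a _ => ?_
            rw [Finset.mul_sum]
            exact Finset.sum_congr rfl fun s' _ => by ring
  -- per-step inequality
  have hstep : ∀ h, 1 ≤ h → h ≤ H →
      (∑ s : S, ∑ a : A, μ h s a *
        ((∑ s' : S, P h s a s' * (V (h + 1) s') ^ 2) -
          (∑ s' : S, P h s a s' * V (h + 1) s') ^ 2))
      ≤ Ghat h - Ghat (h+1) := by
    intro h h1 h2
    rw [hGkey h h1 h2]
    have hGh : Ghat h = ∑ s : S, ∑ a : A, μ h s a * (W h s - (V h s)^2) := by
      simp only [hGdef, if_pos h2]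
    rw [hGh, ← sub_nonneg]
    rw [← Finset.sum_sub_distrib, ← Finset.sum_sub_distrib]
    refine Finset.sum_nonneg fun s _ => ?_
    rw [← Finset.sum_sub_distrib, ← Finset.sum_sub_distrib]
    have hexp : ∀ a : A, μ h s a * (W h s - (V h s)^2)
        - μ h s a * (∑ s' : S, P h s a s' * (W (h+1) s' - (V (h+1) s')^2))
        - μ h s a * ((∑ s' : S, P h s a s' * (V (h + 1) s') ^ 2) -
            (∑ s' : S, P h s a s' * V (h + 1) s') ^ 2)
        = (∑ b : A, μ h s b) * (π h s a *
            ((W h s - (V h s)^2)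
              - ((∑ s' : S, P h s a s' * W (h+1) s')
                  - (∑ s' : S, P h s a s' * (V (h+1) s')^2))
              - ((∑ s' : S, P h s a s' * (V (h + 1) s') ^ 2) -
                  (∑ s' : S, P h s a s' * V (h + 1) s') ^ 2))) := by
      intro a
      rw [hfact h h1 h2 s a]
      have : (∑ s' : S, P h s a s' * (W (h+1) s' - (V (h+1) s')^2))
          = (∑ s' : S, P h s a s' * W (h+1) s')
            - (∑ s' : S, P h s a s' * (V (h+1) s')^2) := by
        rw [← Finset.sum_sub_distrib]
        exact Finset.sum_congr rfl fun s' _ => by ring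
      rw [this]; ring
    rw [Finset.sum_congr rfl fun a _ => hexp a, ← Finset.mul_sum]
    refine mul_nonneg (Finset.sum_nonneg fun b _ => hμnn h h1 h2 s b) ?_
    -- now reduce to Jensen
    have hmem : h ∈ Finset.Icc 1 H := by simp only [Finset.mem_Icc]; omega
    have hsum_expand : (∑ a : A, π h s a *
          ((W h s - (V h s)^2)
            - ((∑ s' : S, P h s a s' * W (h+1) s')
                - (∑ s' : S, P h s a s' * (V (h+1) s')^2))
            - ((∑ s' : S, P h s a s' * (V (h + 1) s') ^ 2) -
                (∑ s' : S, P h s a s' * V (h + 1) s') ^ 2)))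
        = (∑ a : A, π h s a * (W h s - (V h s)^2))
          - (∑ a : A, π h s a * ((∑ s' : S, P h s a s' * W (h+1) s')
                - (∑ s' : S, P h s a s' * (V (h+1) s')^2)))
          - (∑ a : A, π h s a * ((∑ s' : S, P h s a s' * (V (h + 1) s') ^ 2) -
                (∑ s' : S, P h s a s' * V (h + 1) s') ^ 2)) := by
      rw [← Finset.sum_sub_distrib, ← Finset.sum_sub_distrib]
      exact Finset.sum_congr rfl fun a _ => by ring
    rw [hsum_expand]
    have h1sum : (∑ a : A, π h s a * (W h s - (V h s)^2)) = W h s - (V h s)^2 := by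
      rw [← Finset.sum_mul, hπsum, one_mul]
    rw [h1sum, hW_eq h h2 s]
    set Q : A → ℝ := fun a => r h s a + ∑ s' : S, P h s a s' * V (h+1) s' with hQdef
    have hVQ : V h s = ∑ a : A, π h s a * Q a := hV h hmem s
    have hcomb : (∑ a : A, π h s a *
          ((r h s a)^2 + 2 * r h s a * (∑ s' : S, P h s a s' * V (h+1) s')
            + ∑ s' : S, P h s a s' * W (h+1) s') - (V h s)^2)
        - (∑ a : A, π h s a * ((∑ s' : S, P h s a s' * W (h+1) s')
              - (∑ s' : S, P h s a s' * (V (h+1) s')^2)))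
        - (∑ a : A, π h s a * ((∑ s' : S, P h s a s' * (V (h + 1) s') ^ 2) -
              (∑ s' : S, P h s a s' * V (h + 1) s') ^ 2))
        = (∑ a : A, π h s a * (Q a)^2) - (V h s)^2 := by
      have hsplit : (∑ a : A, π h s a *
            ((r h s a)^2 + 2 * r h s a * (∑ s' : S, P h s a s' * V (h+1) s')
              + ∑ s' : S, P h s a s' * W (h+1) s'))
          = (∑ a : A, π h s a * (Q a)^2)
            + (∑ a : A, π h s a * ((∑ s' : S, P h s a s' * W (h+1) s')
                - (∑ s' : S, P h s a s' * (V (h+1) s')^2)))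
            + (∑ a : A, π h s a * ((∑ s' : S, P h s a s' * (V (h + 1) s') ^ 2) -
                (∑ s' : S, P h s a s' * V (h + 1) s') ^ 2)) := by
        rw [← Finset.sum_add_distrib, ← Finset.sum_add_distrib]
        refine Finset.sum_congr rfl fun a _ => ?_
        simp only [hQdef]; ring
      rw [hsplit]; ring
    rw [hcomb, hVQ, sub_nonneg]
    exact jensen_sq (fun a => π h s a) Q (fun a => hπnonneg h s a) (hπsum h s)
  -- sum up and telescope
  calc (∑ h ∈ Finset.Icc 1 H, ∑ s : S, ∑ a : A,
        μ h s a *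
          ((∑ s' : S, P h s a s' * (V (h + 1) s') ^ 2) -
            (∑ s' : S, P h s a s' * V (h + 1) s') ^ 2))
      ≤ ∑ h ∈ Finset.Icc 1 H, (Ghat h - Ghat (h+1)) := by
        refine Finset.sum_le_sum fun h hh => ?_
        rw [Finset.mem_Icc] at hh
        exact hstep h hh.1 hh.2
    _ = Ghat 1 - Ghat (1 + H) := by
        rw [show Finset.Icc 1 H = Finset.Ico 1 (H+1) from (Finset.Ico_add_one_right_eq_Icc 1 H).symm,
          Finset.sum_Ico_eq_sum_range]
        simp only [Nat.add_sub_cancel]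
        exact Finset.sum_range_sub' (fun i => Ghat (1 + i)) H
    _ = Ghat 1 := by
        have : Ghat (1 + H) = 0 := by simp only [hGdef, if_neg (by omega : ¬ 1 + H ≤ H)]
        rw [this, sub_zero]
    _ = W 1 s₁ - (V 1 s₁)^2 := by
        simp only [hGdef, if_pos hH, hμ1]
        have : ∀ s : S, (∑ a : A, (if s = s₁ then (1:ℝ) else 0) * π 1 s a *
            (W 1 s - (V 1 s)^2)) = (if s = s₁ then (1:ℝ) else 0) * (W 1 s - (V 1 s)^2) := by
          intro s
          rw [show (∑ a : A, (if s = s₁ then (1:ℝ) else 0) * π 1 s a *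
              (W 1 s - (V 1 s)^2)) = (if s = s₁ then (1:ℝ) else 0) *
                (W 1 s - (V 1 s)^2) * (∑ a : A, π 1 s a) from by
            rw [Finset.mul_sum]; exact Finset.sum_congr rfl fun a _ => by ring]
          rw [hπsum, mul_one]
        rw [Finset.sum_congr rfl fun s _ => this s]
        simp only [ite_mul, one_mul, zero_mul]
        rw [Finset.sum_ite_eq' Finset.univ s₁ (fun s => W 1 s - (V 1 s)^2)]
        simp
    _ ≤ W 1 s₁ := by nlinarith [sq_nonneg (V 1 s₁)]
    _ ≤ B * H * V 1 s₁ := by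
        have := hWb H (le_refl H) s₁
        rwa [show H + 1 - H = 1 from by omega] at this
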